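/- Let 0<δ≤l. There exists a constant C>0 depending only on δ and l such that for every integer m≥1, every choice of h₀,…,h_{m-1}>0 with δ ≤ ∑_{i=0}^{m-1}h_i ≤ l, and every u∈ℝ^{m+1}, one has max_{0≤i≤m} u_i² ≤ C·∑_{i=0}^{m-1} h_i·(u_i² + u_{ix}²), where u_{ix}=(u_{i+1}−u_i)/h_i. -/

import Mathlib

/-- the discrete Morrey-type inequality (3.4), on grids of total length
between `δ` and `l`. -/
theorem stmt_12 (δ l : ℝ) (hδ : 0 < δ) (hδl : δ ≤ l) :
    ∃ C > (0:ℝ), ∀ m : ℕ, 1 ≤ m → ∀ h : ℕ → ℝ, (∀ i < m, 0 < h i) →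
      δ ≤ ∑ i ∈ Finset.range m, h i → (∑ i ∈ Finset.range m, h i) ≤ l →
      ∀ u : ℕ → ℝ, ∀ i ≤ m,
        (u i)^2 ≤ C * ∑ j ∈ Finset.range m, h j * ((u j)^2 + ((u (j+1) - u j)/h j)^2) := by
  have hl : 0 < l := lt_of_lt_of_le hδ hδl
  refine ⟨2/δ + 2*l, by positivity, ?_⟩
  intro m hm h hpos hδs hsl u i hi
  set q : ℕ → ℝ := fun j => (u (j+1) - u j) / h j with hq
  set S1 := ∑ j ∈ Finset.range m, h j * (u j)^2 with hS1
  set S2 := ∑ j ∈ Finset.range m, h j * (q j)^2 with hS2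
  have hsum : ∑ j ∈ Finset.range m, h j * ((u j)^2 + ((u (j+1) - u j)/h j)^2) = S1 + S2 := by
    rw [hS1, hS2, ← Finset.sum_add_distrib]
    exact Finset.sum_congr rfl fun j _ => by ring
  have hS1nonneg : 0 ≤ S1 :=
    Finset.sum_nonneg fun j hj => by
      have := hpos j (Finset.mem_range.mp hj); positivity
  have hS2nonneg : 0 ≤ S2 :=
    Finset.sum_nonneg fun j hj => by
      have := hpos j (Finset.mem_range.mp hj); positivity
  -- pick the minimizer of (u j)^2 over j < m
  obtain ⟨k, hk, hkmin⟩ :=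
    Finset.exists_min_image (Finset.range m) (fun j => (u j)^2)
      ⟨0, Finset.mem_range.mpr hm⟩
  have hkm : k < m := Finset.mem_range.mp hk
  have hk1 : δ * (u k)^2 ≤ S1 := by
    calc δ * (u k)^2 ≤ (∑ j ∈ Finset.range m, h j) * (u k)^2 :=
          mul_le_mul_of_nonneg_right hδs (sq_nonneg _)
      _ = ∑ j ∈ Finset.range m, h j * (u k)^2 := Finset.sum_mul _ _ _
      _ ≤ S1 := Finset.sum_le_sum fun j hj =>
          mul_le_mul_of_nonneg_left (hkmin j hj) (le_of_lt (hpos j (Finset.mem_range.mp hj)))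
  -- telescoping bound
  have hd : ∀ j < m, u (j+1) - u j = h j * q j := fun j hj => by
    have := hpos j hj
    rw [hq]; field_simp
  have habs : ∀ a b : ℕ, a ≤ b → b ≤ m →
      |u b - u a| ≤ ∑ j ∈ Finset.range m, h j * |q j| := by
    intro a b hab hbm
    have : u b - u a = ∑ j ∈ Finset.Ico a b, (u (j+1) - u j) := by
      rw [Finset.sum_Ico_eq_sub _ hab, Finset.sum_range_sub, Finset.sum_range_sub]
      ring
    rw [this]
    calc |∑ j ∈ Finset.Ico a b, (u (j+1) - u j)|
        ≤ ∑ j ∈ Finset.Ico a b, |u (j+1) - u j| := Finset.abs_sum_le_sum_abs _ _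
      _ ≤ ∑ j ∈ Finset.range m, |u (j+1) - u j| := by
          apply Finset.sum_le_sum_of_subset_of_nonneg
          · intro x hx
            rw [Finset.mem_range]
            exact lt_of_lt_of_le (Finset.mem_Ico.mp hx).2 hbm
          · intros; positivity
      _ = ∑ j ∈ Finset.range m, h j * |q j| := by
          apply Finset.sum_congr rfl
          intro j hj
          rw [hd j (Finset.mem_range.mp hj), abs_mul,
            abs_of_pos (hpos j (Finset.mem_range.mp hj))]
  have habs' : |u i - u k| ≤ ∑ j ∈ Finset.range m, h j * |q j| := by
    rcases le_total k i with hki | hik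
    · exact habs k i hki hi
    · rw [abs_sub_comm]; exact habs i k hik hkm.le
  -- Cauchy–Schwarz
  have hcs : (∑ j ∈ Finset.range m, h j * |q j|)^2 ≤
      (∑ j ∈ Finset.range m, h j) * S2 := by
    have key := Finset.sum_mul_sq_le_sq_mul_sq (Finset.range m)
      (fun j => Real.sqrt (h j)) (fun j => Real.sqrt (h j) * |q j|)
    have e1 : ∀ j ∈ Finset.range m,
        Real.sqrt (h j) * (Real.sqrt (h j) * |q j|) = h j * |q j| := by
      intro j hj
      have hhj := (hpos j (Finset.mem_range.mp hj)).le
      rw [← mul_assoc, Real.mul_self_sqrt hhj]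
    have e2 : ∀ j ∈ Finset.range m, (Real.sqrt (h j))^2 = h j := fun j hj =>
      Real.sq_sqrt (hpos j (Finset.mem_range.mp hj)).le
    have e3 : ∀ j ∈ Finset.range m,
        (Real.sqrt (h j) * |q j|)^2 = h j * (q j)^2 := by
      intro j hj
      rw [mul_pow, Real.sq_sqrt (hpos j (Finset.mem_range.mp hj)).le, sq_abs]
    rw [Finset.sum_congr rfl e1, Finset.sum_congr rfl e2, Finset.sum_congr rfl e3] at key
    exact key
  have hgrad : (u i - u k)^2 ≤ l * S2 := by
    have h1 : (u i - u k)^2 ≤ (∑ j ∈ Finset.range m, h j * |q j|)^2 := by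
      rw [← sq_abs (u i - u k)]
      apply pow_le_pow_left₀ (abs_nonneg _) habs'
    have h2 : (∑ j ∈ Finset.range m, h j) * S2 ≤ l * S2 :=
      mul_le_mul_of_nonneg_right hsl hS2nonneg
    linarith
  -- combine
  rw [hsum]
  have h2 : (u i)^2 ≤ 2*(u k)^2 + 2*(u i - u k)^2 := by nlinarith [sq_nonneg (u i - 2*u k)]
  have hk2 : (u k)^2 ≤ S1 / δ := by
    rw [le_div_iff₀ hδ]; linarith [hk1]
  have : (2/δ) * S1 + 2*l*S2 ≤ (2/δ + 2*l) * (S1 + S2) := by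
    have h3 : 0 ≤ 2/δ := by positivity
    nlinarith
  calc (u i)^2 ≤ 2*(u k)^2 + 2*(u i - u k)^2 := h2
    _ ≤ 2*(S1/δ) + 2*(l*S2) := by linarith
    _ = (2/δ)*S1 + 2*l*S2 := by ring
    _ ≤ (2/δ + 2*l) * (S1 + S2) := this
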